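/- Let S be a conditional simplex in (L⁰)^d such that S = conv(X₁, …, X_N) = conv(Y₁, …, Y_N), where both families X₁, …, X_N and Y₁, …, Y_N are affinely independent. Then σ({X₁, …, X_N}) = σ({Y₁, …, Y_N}). -/

import Mathlib

open MeasureTheory Filter

noncomputable section

variable {Ω : Type*} [MeasurableSpace Ω]

/-- `L⁰(Ω,𝒜,P)`: equivalence classes of real-valued measurable functions modulo
`P`-almost-sure equality. -/
abbrev L0 (P : Measure Ω) : Type _ := Ω →ₘ[P] ℝ

namespace L0

variable (P : Measure Ω)

/-- The indicator `1_A` of a measurable set as an element of `L⁰`. -/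
def ind (A : Set Ω) : L0 P :=
  letI := Classical.dec (MeasurableSet A)
  if h : MeasurableSet A then
    AEEqFun.mk (A.indicator fun _ => (1 : ℝ)) (aestronglyMeasurable_const.indicator h)
  else 0

/-- A partition: a countable family of measurable sets, pairwise disjoint up to null
sets, covering `Ω` up to a null set. -/
structure IsPartition (A : ℕ → Set Ω) : Prop where
  meas : ∀ i, MeasurableSet (A i)
  disj : ∀ i j, i ≠ j → P (A i ∩ A j) = 0
  full : P (⋃ i, A i) = 1

/-- `Z = Σᵢ 1_{Aᵢ} Xᵢ` in `L⁰`: `Z` agrees with `Xᵢ` on `Aᵢ`, i.e. `1_{Aᵢ}·Z = 1_{Aᵢ}·Xᵢ`. -/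
def IsGluing1 (A : ℕ → Set Ω) (X : ℕ → L0 P) (Z : L0 P) : Prop :=
  ∀ i, ind P (A i) * Z = ind P (A i) * X i

/-- `Z = Σᵢ 1_{Aᵢ} Xᵢ` in `(L⁰)^d`. -/
def IsGluing {d : ℕ} (A : ℕ → Set Ω) (X : ℕ → Fin d → L0 P) (Z : Fin d → L0 P) : Prop :=
  ∀ k, IsGluing1 P A (fun i => X i k) (Z k)

/-- The σ-stable hull `σ(𝒞)` of a set `𝒞 ⊆ (L⁰)^d`. -/
def sigmaHull {d : ℕ} (C : Set (Fin d → L0 P)) : Set (Fin d → L0 P) :=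
  {Z | ∃ (A : ℕ → Set Ω) (X : ℕ → Fin d → L0 P),
    IsPartition P A ∧ (∀ i, X i ∈ C) ∧ IsGluing P A X Z}

/-- A function `f` defined (at least) on a σ-stable set `C ⊆ (L⁰)^d` is local if
`f(Σᵢ 1_{Aᵢ} Xᵢ) = Σᵢ 1_{Aᵢ} f(Xᵢ)` for every partition `(Aᵢ)` and family `(Xᵢ)` in `C`. -/
def IsLocal {d e : ℕ} (C : Set (Fin d → L0 P)) (f : (Fin d → L0 P) → (Fin e → L0 P)) : Prop :=
  ∀ (A : ℕ → Set Ω) (X : ℕ → Fin d → L0 P) (Z : Fin d → L0 P),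
    IsPartition P A → (∀ i, X i ∈ C) → Z ∈ C → IsGluing P A X Z →
    IsGluing P A (fun i => f (X i)) (f Z)

/-- Locality for functions with values in `L⁰`. -/
def IsLocalScalar {d : ℕ} (C : Set (Fin d → L0 P)) (f : (Fin d → L0 P) → L0 P) : Prop :=
  ∀ (A : ℕ → Set Ω) (X : ℕ → Fin d → L0 P) (Z : Fin d → L0 P),
    IsPartition P A → (∀ i, X i ∈ C) → Z ∈ C → IsGluing P A X Z →
    IsGluing1 P A (fun i => f (X i)) (f Z)

/-- Locality for functions from `L⁰` to `L⁰`. -/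
def IsLocal1 (C : Set (L0 P)) (f : L0 P → L0 P) : Prop :=
  ∀ (A : ℕ → Set Ω) (X : ℕ → L0 P) (Z : L0 P),
    IsPartition P A → (∀ i, X i ∈ C) → Z ∈ C → IsGluing1 P A X Z →
    IsGluing1 P A (fun i => f (X i)) (f Z)

/-- `P`-almost sure convergence of a sequence in `L⁰`. -/
def TendstoAS (X : ℕ → L0 P) (Y : L0 P) : Prop :=
  ∀ᵐ ω ∂P, Tendsto (fun n => X n ω) atTop (nhds (Y ω))

/-- `P`-almost sure convergence of a sequence in `(L⁰)^d`. -/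
def TendstoASd {d : ℕ} (X : ℕ → Fin d → L0 P) (Y : Fin d → L0 P) : Prop :=
  ∀ k, TendstoAS P (fun n => X n k) (Y k)

/-- Sequential continuity (w.r.t. `P`-a.s. convergence) of `f` on `C ⊆ (L⁰)^d`. -/
def SeqContinuous {d e : ℕ} (C : Set (Fin d → L0 P)) (f : (Fin d → L0 P) → (Fin e → L0 P)) :
    Prop :=
  ∀ (X : ℕ → Fin d → L0 P) (Y : Fin d → L0 P), (∀ n, X n ∈ C) → Y ∈ C →
    TendstoASd P X Y → TendstoASd P (fun n => f (X n)) (f Y)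

/-- Sequential continuity for functions from `L⁰` to `L⁰`. -/
def SeqContinuous1 (C : Set (L0 P)) (f : L0 P → L0 P) : Prop :=
  ∀ (X : ℕ → L0 P) (Y : L0 P), (∀ n, X n ∈ C) → Y ∈ C →
    TendstoAS P X Y → TendstoAS P (fun n => f (X n)) (f Y)

/-- The `L⁰`-convex hull `conv(X₁,…,X_N)` of a finite family in `(L⁰)^d`. -/
def conv {d : ℕ} {ι : Type*} [Fintype ι] (X : ι → Fin d → L0 P) : Set (Fin d → L0 P) :=
  {Y | ∃ lam : ι → L0 P, (∀ i, 0 ≤ lam i) ∧ (∑ i, lam i) = 1 ∧ Y = ∑ i, lam i • X i}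

/-- The affine hull `aff(X₁,…,X_N)` of a finite family in `(L⁰)^d`. -/
def aff {d : ℕ} {ι : Type*} [Fintype ι] (X : ι → Fin d → L0 P) : Set (Fin d → L0 P) :=
  {Y | ∃ lam : ι → L0 P, (∑ i, lam i) = 1 ∧ Y = ∑ i, lam i • X i}

/-- Affine independence of `X₁,…,X_N` in `(L⁰)^d`: either `N = 1`, or `N > 1` and
`Σᵢ₌₁^{N−1} λᵢ (Xᵢ − X_N) = 0` implies `λ₁ = ⋯ = λ_{N−1} = 0`. -/
def AffInd {d : ℕ} : {N : ℕ} → (X : Fin N → Fin d → L0 P) → Prop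
  | 0, _ => False
  | 1, _ => True
  | (m + 2), X => ∀ lam : Fin (m + 1) → L0 P,
      (∑ i : Fin (m + 1), lam i • (X i.castSucc - X (Fin.last (m + 1)))) = 0 → ∀ i, lam i = 0

/-- The `L⁰`-scalar product on `(L⁰)^d`. -/
def inner {d : ℕ} (X Y : Fin d → L0 P) : L0 P := ∑ k, X k * Y k

/-- The `L⁰`-norm on `(L⁰)^d`. -/
def norm {d : ℕ} (X : Fin d → L0 P) : L0 P :=
  AEEqFun.comp Real.sqrt Real.continuous_sqrt (inner P X X)

/-- `D` is the essential supremum (least upper bound in the `P`-a.s. order) of a set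
`F ⊆ L⁰`. -/
def IsEssSup (F : Set (L0 P)) (D : L0 P) : Prop :=
  (∀ X ∈ F, X ≤ D) ∧ ∀ D' : L0 P, (∀ X ∈ F, X ≤ D') → D ≤ D'

/-- `𝒞 ⊆ (L⁰)^d` is bounded if `esssup_{X ∈ 𝒞} ‖X‖` belongs to `L⁰`. -/
def Bounded {d : ℕ} (C : Set (Fin d → L0 P)) : Prop :=
  ∃ b : L0 P, ∀ X ∈ C, norm P X ≤ b

/-- `𝒞 ⊆ (L⁰)^d` is sequentially closed if it contains all `P`-a.s. limits of its
sequences. -/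
def SeqClosed {d : ℕ} (C : Set (Fin d → L0 P)) : Prop :=
  ∀ (X : ℕ → Fin d → L0 P) (Y : Fin d → L0 P), (∀ n, X n ∈ C) → TendstoASd P X Y → Y ∈ C

/-- `L⁰`-convexity of a subset of `(L⁰)^d`. -/
def L0Convex {d : ℕ} (C : Set (Fin d → L0 P)) : Prop :=
  ∀ X ∈ C, ∀ Y ∈ C, ∀ lam : L0 P, 0 ≤ lam → lam ≤ 1 → lam • X + (1 - lam) • Y ∈ C

/-- The vertices `Y_k^π = (1/k) Σᵢ₌₁ᵏ X_{π(i)}` of the member `C_π` of the barycentric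
subdivision (0-based: `bary P X π k = (1/(k+1)) Σ_{i ≤ k} X_{π(i)}`). -/
def bary {d N : ℕ} (X : Fin N → Fin d → L0 P) (π : Equiv.Perm (Fin N)) (k : Fin N) :
    Fin d → L0 P :=
  ((k.1 + 1 : ℝ)⁻¹) • ∑ i ∈ Finset.univ.filter (· ≤ k), X (π i)

end L0

end

namespace Stmt3Aux
variable {Ω : Type*} [MeasurableSpace Ω] (P : Measure Ω)

lemma coeFn_sum {ι : Type*} (s : Finset ι) (f : ι → L0 P) :
    ⇑(∑ i ∈ s, f i) =ᵐ[P] fun ω => ∑ i ∈ s, f i ω := by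
  classical
  induction s using Finset.induction with
  | empty => simp only [Finset.sum_empty]; exact AEEqFun.coeFn_zero (μ := P) (β := ℝ)
  | @insert a s h ih =>
    rw [Finset.sum_insert h]
    filter_upwards [AEEqFun.coeFn_add (f a) (∑ i ∈ s, f i), ih] with ω h1 h2
    simp only [Pi.add_apply] at h1
    rw [h1, h2, Finset.sum_insert h]

lemma ext_ae {f g : L0 P} (h : ⇑f =ᵐ[P] ⇑g) : f = g := AEEqFun.ext h

noncomputable instance : CommRing (L0 P) where
  __ := (inferInstance : AddCommGroup (L0 P))
  __ := (inferInstance : CommMonoid (L0 P))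
  left_distrib f g h := by
    apply ext_ae P
    filter_upwards [AEEqFun.coeFn_mul f (g + h), AEEqFun.coeFn_add g h,
      AEEqFun.coeFn_add (f * g) (f * h), AEEqFun.coeFn_mul f g, AEEqFun.coeFn_mul f h]
      with ω h1 h2 h3 h4 h5
    simp only [Pi.mul_apply, Pi.add_apply] at *
    rw [h1, h2, h3, h4, h5]
    ring
  right_distrib f g h := by
    apply ext_ae P
    filter_upwards [AEEqFun.coeFn_mul (f + g) h, AEEqFun.coeFn_add f g,
      AEEqFun.coeFn_add (f * h) (g * h), AEEqFun.coeFn_mul f h, AEEqFun.coeFn_mul g h]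
      with ω h1 h2 h3 h4 h5
    simp only [Pi.mul_apply, Pi.add_apply] at *
    rw [h1, h2, h3, h4, h5]
    ring
  zero_mul f := by
    apply ext_ae P
    filter_upwards [AEEqFun.coeFn_mul 0 f, AEEqFun.coeFn_zero (μ := P) (β := ℝ)] with ω h1 h2
    simp only [Pi.mul_apply] at h1
    rw [h1, h2]
    simp [h2]
  mul_zero f := by
    apply ext_ae P
    filter_upwards [AEEqFun.coeFn_mul f 0, AEEqFun.coeFn_zero (μ := P) (β := ℝ)] with ω h1 h2
    simp only [Pi.mul_apply] at h1
    rw [h1, h2]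
    simp [h2]


lemma exists_measurable_rep (f : L0 P) : ∃ g : Ω → ℝ, Measurable g ∧ ⇑f =ᵐ[P] g := by
  have h := f.aestronglyMeasurable.aemeasurable
  exact ⟨h.mk _, h.measurable_mk, h.ae_eq_mk⟩

lemma perm_rows {N : ℕ} (Λ M : Fin N → Fin N → ℝ)
    (hΛ0 : ∀ j i, 0 ≤ Λ j i) (hM0 : ∀ i j, 0 ≤ M i j)
    (hΛ1 : ∀ j, ∑ i, Λ j i = 1) (hM1 : ∀ i, ∑ j, M i j = 1)
    (hMΛ : ∀ i i', ∑ j, M i j * Λ j i' = if i' = i then 1 else 0)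
    (hΛM : ∀ j j', ∑ i, Λ j i * M i j' = if j' = j then 1 else 0)
    (j : Fin N) : ∃ i, Λ j i = 1 ∧ ∀ i', i' ≠ i → Λ j i' = 0 := by
  obtain ⟨i, hi⟩ : ∃ i, 0 < Λ j i := by
    by_contra hc
    push_neg at hc
    have h0 : ∑ i, Λ j i = 0 := Finset.sum_eq_zero fun i _ => le_antisymm (hc i) (hΛ0 j i)
    rw [hΛ1 j] at h0; norm_num at h0
  have hMrow : ∀ j', j' ≠ j → M i j' = 0 := by
    intro j' hj'
    have h0 := hΛM j j'
    rw [if_neg hj'] at h0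
    have h1 := (Finset.sum_eq_zero_iff_of_nonneg
      (fun i' _ => mul_nonneg (hΛ0 j i') (hM0 i' j'))).1 h0 i (Finset.mem_univ i)
    rcases mul_eq_zero.1 h1 with h | h
    · exact absurd h (ne_of_gt hi)
    · exact h
  have hMij : M i j = 1 := by
    have h1 := hM1 i
    rwa [Finset.sum_eq_single j (fun j' _ hj' => hMrow j' hj') (by simp)] at h1
  have hzero : ∀ i', i' ≠ i → Λ j i' = 0 := by
    intro i' hi'
    have h0 := hMΛ i i'
    rw [if_neg hi'] at h0
    have h1 := (Finset.sum_eq_zero_iff_of_nonneg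
      (fun j'' _ => mul_nonneg (hM0 i j'') (hΛ0 j'' i'))).1 h0 j (Finset.mem_univ j)
    rwa [hMij, one_mul] at h1
  refine ⟨i, ?_, hzero⟩
  have h1 := hΛ1 j
  rwa [Finset.sum_eq_single i (fun i' _ h => hzero i' h) (by simp)] at h1


-- indicator lemmas
lemma coeFn_ind {A : Set Ω} (hA : MeasurableSet A) :
    ⇑(L0.ind P A) =ᵐ[P] A.indicator fun _ => (1:ℝ) := by
  rw [L0.ind]
  rw [dif_pos hA]
  exact AEEqFun.coeFn_mk _ _

lemma ind_empty : L0.ind P (∅ : Set Ω) = 0 := by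
  apply ext_ae P
  filter_upwards [coeFn_ind P MeasurableSet.empty, AEEqFun.coeFn_zero (μ := P) (β := ℝ)]
    with ω h1 h2
  rw [h1, h2]
  simp

lemma ind_inter {A B : Set Ω} (hA : MeasurableSet A) (hB : MeasurableSet B) :
    L0.ind P (A ∩ B) = L0.ind P A * L0.ind P B := by
  apply ext_ae P
  filter_upwards [coeFn_ind P (hA.inter hB), AEEqFun.coeFn_mul (L0.ind P A) (L0.ind P B),
    coeFn_ind P hA, coeFn_ind P hB] with ω h1 h2 h3 h4
  rw [h1, h2]
  simp only [Pi.mul_apply]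
  rw [h3, h4]
  by_cases hAm : ω ∈ A <;> by_cases hBm : ω ∈ B <;>
    simp [Set.indicator_apply, hAm, hBm, Set.mem_inter_iff]

lemma aff_unique {d N : ℕ} {X : Fin N → Fin d → L0 P} (hX : L0.AffInd P X)
    (ν ν' : Fin N → L0 P) (hs : ∑ i, ν i = 1) (hs' : ∑ i, ν' i = 1)
    (he : ∑ i, ν i • X i = ∑ i, ν' i • X i) : ν = ν' := by
  match N, X, hX with
  | 1, X, _ =>
    funext i
    fin_cases i
    simpa using hs.trans hs'.symm
  | (m+2), X, hX =>
    have key : ∀ i : Fin (m+1), ν i.castSucc - ν' i.castSucc = 0 := by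
      apply hX
      have expand : ∑ i : Fin (m+1),
          (ν i.castSucc - ν' i.castSucc) • (X i.castSucc - X (Fin.last (m+1)))
          = (∑ i : Fin (m+1), ν i.castSucc • X i.castSucc)
            - (∑ i : Fin (m+1), ν' i.castSucc • X i.castSucc)
            - ((∑ i : Fin (m+1), ν i.castSucc) - (∑ i : Fin (m+1), ν' i.castSucc))
              • X (Fin.last (m+1)) := by
        simp only [smul_sub, sub_smul, Finset.sum_sub_distrib, Finset.sum_smul]
      rw [expand]
      have e1 : ∑ i : Fin (m+1), ν i.castSucc • X i.castSucc
          = (∑ i : Fin (m+2), ν i • X i) - ν (Fin.last (m+1)) • X (Fin.last (m+1)) := by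
        rw [Fin.sum_univ_castSucc (f := fun i => ν i • X i)]; abel
      have e1' : ∑ i : Fin (m+1), ν' i.castSucc • X i.castSucc
          = (∑ i : Fin (m+2), ν' i • X i) - ν' (Fin.last (m+1)) • X (Fin.last (m+1)) := by
        rw [Fin.sum_univ_castSucc (f := fun i => ν' i • X i)]; abel
      have e2 : ∑ i : Fin (m+1), ν i.castSucc = 1 - ν (Fin.last (m+1)) := by
        rw [← hs, Fin.sum_univ_castSucc (f := fun i => ν i)]; abel
      have e2' : ∑ i : Fin (m+1), ν' i.castSucc = 1 - ν' (Fin.last (m+1)) := by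
        rw [← hs', Fin.sum_univ_castSucc (f := fun i => ν' i)]; abel
      rw [e1, e1', e2, e2', he]
      module
    funext i
    induction i using Fin.lastCases with
    | last =>
      have h1 : ∀ i : Fin (m+1), ν i.castSucc = ν' i.castSucc :=
        fun i => sub_eq_zero.1 (key i)
      have h2 := hs.trans hs'.symm
      rw [Fin.sum_univ_castSucc (f := fun i => ν i), Fin.sum_univ_castSucc (f := fun i => ν' i)]
        at h2
      have h3 : ∑ i : Fin (m+1), ν i.castSucc = ∑ i : Fin (m+1), ν' i.castSucc :=
        Finset.sum_congr rfl fun i _ => h1 i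
      rw [h3] at h2
      exact add_left_cancel h2
    | cast i => exact sub_eq_zero.1 (key i)

lemma compl_null [IsProbabilityMeasure P] {S : Set Ω} (hS : MeasurableSet S)
    (h : P S = 1) : P Sᶜ = 0 := by
  rw [measure_compl hS (measure_ne_top P S), h, measure_univ, tsub_self]

lemma prob_eq_one_of_compl [IsProbabilityMeasure P] {S : Set Ω} (hS : MeasurableSet S)
    (h : P Sᶜ = 0) : P S = 1 := by
  have h2 := measure_add_measure_compl (μ := P) hS
  rwa [h, add_zero, measure_univ] at h2

lemma sigmaHull_trans {d : ℕ} [IsProbabilityMeasure P] {C D : Set (Fin d → L0 P)}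
    (hCD : ∀ W ∈ C, W ∈ L0.sigmaHull P D) :
    L0.sigmaHull P C ⊆ L0.sigmaHull P D := by
  rintro Z ⟨B, W, hBpart, hWC, hglue⟩
  choose A V hApart hVD hAglue using fun m => hCD (W m) (hWC m)
  let e : ℕ ≃ ℕ × ℕ := (Denumerable.eqv (ℕ × ℕ)).symm
  refine ⟨fun n => B (e n).1 ∩ A (e n).1 (e n).2, fun n => V (e n).1 (e n).2,
    ⟨fun n => (hBpart.meas _).inter ((hApart _).meas _), ?_, ?_⟩,
    fun n => hVD _ _, ?_⟩
  · -- pairwise a.e. disjoint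
    intro n n' hnn
    have hne : e n ≠ e n' := fun hh => hnn (e.injective hh)
    by_cases h1 : (e n).1 = (e n').1
    · have h2 : (e n).2 ≠ (e n').2 := fun h2 => hne (Prod.ext h1 h2)
      refine measure_mono_null ?_ ((hApart (e n).1).disj _ _ h2)
      rintro ω ⟨⟨-, ha⟩, ⟨-, hb⟩⟩
      exact ⟨ha, h1 ▸ hb⟩
    · refine measure_mono_null ?_ (hBpart.disj _ _ h1)
      rintro ω ⟨⟨ha, -⟩, ⟨hb, -⟩⟩
      exact ⟨ha, hb⟩
  · -- full
    have hU : (⋃ n, B (e n).1 ∩ A (e n).1 (e n).2)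
        = ⋃ m, ⋃ i, B m ∩ A m i := by
      rw [e.surjective.iUnion_comp (g := fun p => B p.1 ∩ A p.1 p.2)]
      ext ω
      simp [Prod.exists]
    rw [hU]
    have hmeas : MeasurableSet (⋃ m, ⋃ i, B m ∩ A m i) :=
      MeasurableSet.iUnion fun m => MeasurableSet.iUnion fun i =>
        (hBpart.meas m).inter ((hApart m).meas i)
    refine prob_eq_one_of_compl P hmeas ?_
    refine measure_mono_null (t := (⋃ m, B m)ᶜ ∪ ⋃ m, (⋃ i, A m i)ᶜ) ?_ ?_
    · intro ω hω
      simp only [Set.mem_compl_iff, Set.mem_iUnion, not_exists] at hω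
      by_cases hB : ∃ m, ω ∈ B m
      · obtain ⟨m, hm⟩ := hB
        refine Or.inr (Set.mem_iUnion.2 ⟨m, fun hA => ?_⟩)
        obtain ⟨i, hi⟩ := Set.mem_iUnion.1 hA
        exact hω m i ⟨hm, hi⟩
      · push_neg at hB
        exact Or.inl (by simpa using hB)
    · refine measure_union_null ?_ (measure_iUnion_null fun m => ?_)
      · exact compl_null P (MeasurableSet.iUnion hBpart.meas) hBpart.full
      · exact compl_null P (MeasurableSet.iUnion (hApart m).meas) (hApart m).full
  · -- gluing
    intro k n
    have h1 := hglue k (e n).1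
    have h2 := hAglue (e n).1 k (e n).2
    rw [ind_inter P (hBpart.meas _) ((hApart _).meas _)]
    calc L0.ind P (B (e n).1) * L0.ind P (A (e n).1 (e n).2) * Z k
        = L0.ind P (A (e n).1 (e n).2) * (L0.ind P (B (e n).1) * Z k) := by ring
      _ = L0.ind P (A (e n).1 (e n).2) * (L0.ind P (B (e n).1) * W (e n).1 k) := by rw [h1]
      _ = L0.ind P (B (e n).1) * (L0.ind P (A (e n).1 (e n).2) * W (e n).1 k) := by ring
      _ = L0.ind P (B (e n).1) * (L0.ind P (A (e n).1 (e n).2) * V (e n).1 (e n).2 k) := by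
          rw [h2]
      _ = L0.ind P (B (e n).1) * L0.ind P (A (e n).1 (e n).2) * V (e n).1 (e n).2 k := by ring

lemma zero_le_one' : (0 : L0 P) ≤ 1 := by
  rw [← AEEqFun.coeFn_le]
  filter_upwards [AEEqFun.coeFn_zero (μ := P) (β := ℝ), AEEqFun.coeFn_one (μ := P) (β := ℝ)]
    with ω h1 h2
  rw [h1, h2]
  exact zero_le_one

lemma mem_conv_self {d N : ℕ} (X : Fin N → Fin d → L0 P) (j : Fin N) :
    X j ∈ L0.conv P X := by
  classical
  refine ⟨fun i => if i = j then 1 else 0, fun i => ?_, by simp, by simp [ite_smul]⟩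
  dsimp only
  split
  · exact zero_le_one' P
  · exact le_refl 0

lemma ae_eq_sum_mul {n : ℕ} (f g : Fin n → L0 P) (f' g' : Fin n → Ω → ℝ)
    (hf : ∀ j, ⇑(f j) =ᵐ[P] f' j) (hg : ∀ j, ⇑(g j) =ᵐ[P] g' j) :
    ⇑(∑ j, f j * g j) =ᵐ[P] fun ω => ∑ j, f' j ω * g' j ω := by
  filter_upwards [coeFn_sum P Finset.univ (fun j => f j * g j),
    ae_all_iff.2 fun j => AEEqFun.coeFn_mul (f j) (g j),
    ae_all_iff.2 hf, ae_all_iff.2 hg] with ω h1 h2 h3 h4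
  rw [h1]
  refine Finset.sum_congr rfl fun j _ => ?_
  rw [h2 j, Pi.mul_apply, h3 j, h4 j]

lemma ae_ite01 (c : Prop) [Decidable c] :
    ⇑(if c then (1 : L0 P) else 0) =ᵐ[P] fun _ => if c then (1 : ℝ) else 0 := by
  by_cases hc : c
  · simp only [if_pos hc]
    exact AEEqFun.coeFn_one
  · simp only [if_neg hc]
    exact AEEqFun.coeFn_zero

lemma range_mem_sigmaHull {d N : ℕ} [IsProbabilityMeasure P]
    (X Y : Fin N → Fin d → L0 P) (hX : L0.AffInd P X) (hY : L0.AffInd P Y)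
    (h : L0.conv P X = L0.conv P Y) (j : Fin N) :
    Y j ∈ L0.sigmaHull P (Set.range X) := by
  classical
  have hYmem : ∀ j', Y j' ∈ L0.conv P X := fun j' => h.symm ▸ mem_conv_self P Y j'
  have hXmem : ∀ i, X i ∈ L0.conv P Y := fun i => h ▸ mem_conv_self P X i
  choose Λ hΛ0 hΛ1 hΛrep using hYmem
  choose M hM0 hM1 hMrep using hXmem
  -- matrix product identities
  have hcomp : ∀ i, X i = ∑ i', (∑ j', M i j' * Λ j' i') • X i' := by
    intro i
    calc X i = ∑ j', M i j' • Y j' := hMrep i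
      _ = ∑ j', M i j' • ∑ i', Λ j' i' • X i' := by
          exact Finset.sum_congr rfl fun j' _ => by rw [← hΛrep j']
      _ = ∑ j', ∑ i', (M i j' * Λ j' i') • X i' := by
          exact Finset.sum_congr rfl fun j' _ => by
            rw [Finset.smul_sum]
            exact Finset.sum_congr rfl fun i' _ => (smul_smul _ _ _)
      _ = ∑ i', ∑ j', (M i j' * Λ j' i') • X i' := Finset.sum_comm
      _ = ∑ i', (∑ j', M i j' * Λ j' i') • X i' := by
          exact Finset.sum_congr rfl fun i' _ => (Finset.sum_smul).symm
  have hcompY : ∀ j', Y j' = ∑ j'', (∑ i, Λ j' i * M i j'') • Y j'' := by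
    intro j'
    calc Y j' = ∑ i, Λ j' i • X i := hΛrep j'
      _ = ∑ i, Λ j' i • ∑ j'', M i j'' • Y j'' := by
          exact Finset.sum_congr rfl fun i _ => by rw [← hMrep i]
      _ = ∑ i, ∑ j'', (Λ j' i * M i j'') • Y j'' := by
          exact Finset.sum_congr rfl fun i _ => by
            rw [Finset.smul_sum]
            exact Finset.sum_congr rfl fun j'' _ => (smul_smul _ _ _)
      _ = ∑ j'', ∑ i, (Λ j' i * M i j'') • Y j'' := Finset.sum_comm
      _ = ∑ j'', (∑ i, Λ j' i * M i j'') • Y j'' := by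
          exact Finset.sum_congr rfl fun j'' _ => (Finset.sum_smul).symm
  have hrow : ∀ i, ∑ i', ∑ j', M i j' * Λ j' i' = 1 := by
    intro i
    rw [Finset.sum_comm]
    calc ∑ j', ∑ i', M i j' * Λ j' i' = ∑ j', M i j' * ∑ i', Λ j' i' := by
          exact Finset.sum_congr rfl fun j' _ => (Finset.mul_sum _ _ _).symm
      _ = ∑ j', M i j' := by
          exact Finset.sum_congr rfl fun j' _ => by rw [hΛ1 j', mul_one]
      _ = 1 := hM1 i
  have hrowY : ∀ j', ∑ j'', ∑ i, Λ j' i * M i j'' = 1 := by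
    intro j'
    rw [Finset.sum_comm]
    calc ∑ i, ∑ j'', Λ j' i * M i j'' = ∑ i, Λ j' i * ∑ j'', M i j'' := by
          exact Finset.sum_congr rfl fun i _ => (Finset.mul_sum _ _ _).symm
      _ = ∑ i, Λ j' i := by
          exact Finset.sum_congr rfl fun i _ => by rw [hM1 i, mul_one]
      _ = 1 := hΛ1 j'
  have hMΛ : ∀ i i', (∑ j', M i j' * Λ j' i') = if i' = i then 1 else 0 := by
    intro i i'
    have hu := aff_unique P hX (fun i' => ∑ j', M i j' * Λ j' i')
      (fun i' => if i' = i then 1 else 0) (hrow i) (by simp) ?_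
    · exact congrFun hu i'
    · rw [← hcomp i]
      simp [ite_smul]
  have hΛM : ∀ j' j'', (∑ i, Λ j' i * M i j'') = if j'' = j' then 1 else 0 := by
    intro j' j''
    have hu := aff_unique P hY (fun j'' => ∑ i, Λ j' i * M i j'')
      (fun j'' => if j'' = j' then 1 else 0) (hrowY j') (by simp) ?_
    · exact congrFun hu j''
    · rw [← hcompY j']
      simp [ite_smul]
  -- measurable representatives
  have hΛex : ∀ a b, ∃ g : Ω → ℝ, Measurable g ∧ ⇑(Λ a b) =ᵐ[P] g :=
    fun a b => exists_measurable_rep P _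
  have hMex : ∀ a b, ∃ g : Ω → ℝ, Measurable g ∧ ⇑(M a b) =ᵐ[P] g :=
    fun a b => exists_measurable_rep P _
  choose gΛ hgΛm hgΛae using hΛex
  choose gM hgMm hgMae using hMex
  -- a.e. pointwise facts
  have haeΛ0 : ∀ᵐ ω ∂P, ∀ a b, 0 ≤ gΛ a b ω := by
    rw [ae_all_iff]; intro a; rw [ae_all_iff]; intro b
    filter_upwards [AEEqFun.coeFn_le.2 (hΛ0 a b), AEEqFun.coeFn_zero (μ := P) (β := ℝ),
      hgΛae a b] with ω h1 h2 h3
    rw [← h3]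
    calc (0:ℝ) = (0 : L0 P) ω := h2.symm
      _ ≤ (Λ a b) ω := h1
  have haeM0 : ∀ᵐ ω ∂P, ∀ a b, 0 ≤ gM a b ω := by
    rw [ae_all_iff]; intro a; rw [ae_all_iff]; intro b
    filter_upwards [AEEqFun.coeFn_le.2 (hM0 a b), AEEqFun.coeFn_zero (μ := P) (β := ℝ),
      hgMae a b] with ω h1 h2 h3
    rw [← h3]
    calc (0:ℝ) = (0 : L0 P) ω := h2.symm
      _ ≤ (M a b) ω := h1
  have haeΛ1 : ∀ᵐ ω ∂P, ∀ a, ∑ b, gΛ a b ω = 1 := by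
    rw [ae_all_iff]; intro a
    have hc : ⇑(∑ b, Λ a b) =ᵐ[P] ⇑(1 : L0 P) := by rw [hΛ1 a]
    filter_upwards [coeFn_sum P Finset.univ (fun b => Λ a b), hc,
      AEEqFun.coeFn_one (μ := P) (β := ℝ), ae_all_iff.2 fun b => hgΛae a b] with ω h1 h2 h3 h4
    calc ∑ b, gΛ a b ω = ∑ b, (Λ a b) ω := Finset.sum_congr rfl fun b _ => (h4 b).symm
      _ = (∑ b, Λ a b) ω := h1.symm
      _ = (1 : L0 P) ω := h2
      _ = 1 := h3
  have haeM1 : ∀ᵐ ω ∂P, ∀ a, ∑ b, gM a b ω = 1 := by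
    rw [ae_all_iff]; intro a
    have hc : ⇑(∑ b, M a b) =ᵐ[P] ⇑(1 : L0 P) := by rw [hM1 a]
    filter_upwards [coeFn_sum P Finset.univ (fun b => M a b), hc,
      AEEqFun.coeFn_one (μ := P) (β := ℝ), ae_all_iff.2 fun b => hgMae a b] with ω h1 h2 h3 h4
    calc ∑ b, gM a b ω = ∑ b, (M a b) ω := Finset.sum_congr rfl fun b _ => (h4 b).symm
      _ = (∑ b, M a b) ω := h1.symm
      _ = (1 : L0 P) ω := h2
      _ = 1 := h3
  have haeMΛ : ∀ᵐ ω ∂P, ∀ i i', ∑ j', gM i j' ω * gΛ j' i' ω = if i' = i then 1 else 0 := by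
    rw [ae_all_iff]; intro i; rw [ae_all_iff]; intro i'
    have h1 := ae_eq_sum_mul P (fun j' => M i j') (fun j' => Λ j' i')
      (fun j' => gM i j') (fun j' => gΛ j' i') (fun j' => hgMae i j') (fun j' => hgΛae j' i')
    have h2 : ⇑(∑ j', M i j' * Λ j' i') =ᵐ[P] ⇑(if i' = i then (1 : L0 P) else 0) := by
      rw [hMΛ i i']
    filter_upwards [h1, h2, ae_ite01 P (i' = i)] with ω e1 e2 e3
    rw [← e1, e2, e3]
  have haeΛM : ∀ᵐ ω ∂P, ∀ j' j'', ∑ i, gΛ j' i ω * gM i j'' ω = if j'' = j' then 1 else 0 := by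
    rw [ae_all_iff]; intro j'; rw [ae_all_iff]; intro j''
    have h1 := ae_eq_sum_mul P (fun i => Λ j' i) (fun i => M i j'')
      (fun i => gΛ j' i) (fun i => gM i j'') (fun i => hgΛae j' i) (fun i => hgMae i j'')
    have h2 : ⇑(∑ i, Λ j' i * M i j'') =ᵐ[P] ⇑(if j'' = j' then (1 : L0 P) else 0) := by
      rw [hΛM j' j'']
    filter_upwards [h1, h2, ae_ite01 P (j'' = j')] with ω e1 e2 e3
    rw [← e1, e2, e3]
  have hbasis : ∀ᵐ ω ∂P, ∀ a, ∃ i, gΛ a i ω = 1 ∧ ∀ i', i' ≠ i → gΛ a i' ω = 0 := by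
    filter_upwards [haeΛ0, haeM0, haeΛ1, haeM1, haeMΛ, haeΛM] with ω e1 e2 e3 e4 e5 e6
    exact fun a => perm_rows (fun p q => gΛ p q ω) (fun p q => gM p q ω)
      (fun p q => e1 p q) (fun p q => e2 p q) e3 e4 e5 e6 a
  -- the partition sets
  set Aset : Fin N → Set Ω := fun i => {ω | gΛ j i ω = 1} with hAset
  have hAmeas : ∀ i, MeasurableSet (Aset i) := fun i => hgΛm j i (measurableSet_singleton 1)
  -- pairwise intersections are null
  have hAdisj : ∀ i i', i ≠ i' → P (Aset i ∩ Aset i') = 0 := by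
    intro i i' hne
    have hsub : ∀ᵐ ω ∂P, ω ∉ Aset i ∩ Aset i' := by
      filter_upwards [hbasis] with ω hb
      rintro ⟨h1, h2⟩
      obtain ⟨i0, hi0, hoth⟩ := hb j
      have h1' : gΛ j i ω = 1 := h1
      have h2' : gΛ j i' ω = 1 := h2
      have e1 : i = i0 := by
        by_contra hc
        rw [hoth i hc] at h1'
        norm_num at h1'
      have e2 : i' = i0 := by
        by_contra hc
        rw [hoth i' hc] at h2'
        norm_num at h2'
      exact hne (e1.trans e2.symm)
    exact measure_eq_zero_iff_ae_notMem.2 hsub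
  -- union is a.e. full
  have hAfull : P (⋃ i, Aset i) = 1 := by
    refine prob_eq_one_of_compl P (MeasurableSet.iUnion hAmeas) ?_
    have hae : ∀ᵐ ω ∂P, ω ∈ ⋃ i, Aset i := by
      filter_upwards [hbasis] with ω hb
      obtain ⟨i0, hi0, -⟩ := hb j
      exact Set.mem_iUnion.2 ⟨i0, hi0⟩
    refine measure_eq_zero_iff_ae_notMem.2 ?_
    filter_upwards [hae] with ω hω
    exact not_not_intro hω
  -- key indicator identity
  have hkey : ∀ i i', L0.ind P (Aset i) * Λ j i'
      = if i' = i then L0.ind P (Aset i) else 0 := by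
    intro i i'
    apply ext_ae P
    have hrhs : ⇑(if i' = i then L0.ind P (Aset i) else 0)
        =ᵐ[P] fun ω => if i' = i then (Aset i).indicator (fun _ => (1:ℝ)) ω else 0 := by
      by_cases hc : i' = i
      · simp only [if_pos hc]
        exact coeFn_ind P (hAmeas i)
      · simp only [if_neg hc]
        exact AEEqFun.coeFn_zero
    filter_upwards [AEEqFun.coeFn_mul (L0.ind P (Aset i)) (Λ j i'), coeFn_ind P (hAmeas i),
      hgΛae j i', hbasis, hrhs] with ω e1 e2 e3 e4 e5
    rw [e1, Pi.mul_apply, e2, e3, e5]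
    by_cases hω : ω ∈ Aset i
    · obtain ⟨i0, hi0, hoth⟩ := e4 j
      have hii0 : i = i0 := by
        by_contra hc
        have := hoth i hc
        have h1 : gΛ j i ω = 1 := hω
        rw [this] at h1
        norm_num at h1
      have hval : gΛ j i' ω = if i' = i then 1 else 0 := by
        by_cases hc : i' = i
        · rw [hc, if_pos rfl]; exact hω
        · rw [if_neg hc, hoth i' (hii0 ▸ hc)]
      rw [hval, Set.indicator_of_mem hω]
      by_cases hc : i' = i <;> simp [hc]
    · rw [Set.indicator_of_notMem hω]
      by_cases hc : i' = i <;> simp [hc]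
  -- component formula
  have hYk : ∀ k, Y j k = ∑ i', Λ j i' * X i' k := by
    intro k
    have := congrFun (hΛrep j) k
    simpa [Finset.sum_apply, Pi.smul_apply, smul_eq_mul] using this
  -- assemble the sigmaHull membership
  refine ⟨fun n => if hn : n < N then Aset ⟨n, hn⟩ else ∅,
    fun n => if hn : n < N then X ⟨n, hn⟩ else X j, ?_, ?_, ?_⟩
  · constructor
    · intro n
      by_cases hn : n < N
      · simpa [hn] using hAmeas ⟨n, hn⟩
      · simp [hn]
    · intro n n' hnn
      by_cases hn : n < N <;> by_cases hn' : n' < N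
      · have hne : (⟨n, hn⟩ : Fin N) ≠ ⟨n', hn'⟩ := by
          simp only [ne_eq, Fin.mk.injEq]
          exact hnn
        simpa [hn, hn'] using hAdisj _ _ hne
      · simp [hn, hn']
      · simp [hn, hn']
      · simp [hn, hn']
    · have hU : (⋃ n, if hn : n < N then Aset ⟨n, hn⟩ else ∅) = ⋃ i, Aset i := by
        ext ω
        simp only [Set.mem_iUnion]
        constructor
        · rintro ⟨n, hω⟩
          by_cases hn : n < N
          · rw [dif_pos hn] at hω
            exact ⟨⟨n, hn⟩, hω⟩
          · rw [dif_neg hn] at hω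
            exact hω.elim
        · rintro ⟨i, hω⟩
          exact ⟨i.1, by rw [dif_pos i.2]; exact hω⟩
      rw [hU]
      exact hAfull
  · intro n
    by_cases hn : n < N
    · exact ⟨⟨n, hn⟩, by simp [hn]⟩
    · exact ⟨j, by simp [hn]⟩
  · intro k n
    by_cases hn : n < N
    · simp only [dif_pos hn]
      set i : Fin N := ⟨n, hn⟩
      rw [hYk k, Finset.mul_sum]
      have : ∀ i', L0.ind P (Aset i) * (Λ j i' * X i' k)
          = (if i' = i then L0.ind P (Aset i) else 0) * X i' k := by
        intro i'
        rw [← mul_assoc, hkey i i']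
      rw [Finset.sum_congr rfl fun i' _ => this i']
      rw [Finset.sum_eq_single i]
      · rw [if_pos rfl]
      · intro i' _ hne
        rw [if_neg hne, zero_mul]
      · intro hmem
        exact absurd (Finset.mem_univ i) hmem
    · simp only [dif_neg hn]
      rw [ind_empty P, zero_mul, zero_mul]

end Stmt3Aux

open MeasureTheory in
/-- two affinely independent families spanning the same conditional simplex
have the same σ-stable hull. -/
theorem stmt_3 {Ω : Type*} [MeasurableSpace Ω] (P : Measure Ω) [IsProbabilityMeasure P]
    {d N : ℕ} (X Y : Fin N → Fin d → L0 P)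
    (hX : L0.AffInd P X) (hY : L0.AffInd P Y)
    (h : L0.conv P X = L0.conv P Y) :
    L0.sigmaHull P (Set.range X) = L0.sigmaHull P (Set.range Y) := by
  cases N with
  | zero => exact (hX : False).elim
  | succ n =>
    apply Set.Subset.antisymm
    · exact Stmt3Aux.sigmaHull_trans P (fun W hW => by
        obtain ⟨i, rfl⟩ := hW
        exact Stmt3Aux.range_mem_sigmaHull P Y X hY hX h.symm i)
    · exact Stmt3Aux.sigmaHull_trans P (fun W hW => by
        obtain ⟨i, rfl⟩ := hW
        exact Stmt3Aux.range_mem_sigmaHull P X Y hX hY h i)
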